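/- Let n be a positive integer, k ∈ {0,1,…,n}, 0 ≤ ρ < 1, and let g : (0,1) → ℝ satisfy Φ(g(λ)) = λ for all λ ∈ (0,1). Define P_λ[X = k] = ∫_{−∞}^{∞} φ(y) C(n,k) G(λ,ρ,y)^k (1 − G(λ,ρ,y))^{n−k} dy with G(λ,ρ,y) = Φ((g(λ) − √ρ·y)/√(1−ρ)). Then the constrained neutral Bayesian estimator λ₂*(u) = (∫_0^u λ·P_λ[X=k] dλ) / (∫_0^u P_λ[X=k] dλ) is differentiable in u on (0,1) with derivative dλ₂*(u)/du = P_u[X=k] · (∫_0^u (u−λ)·P_λ[X=k] dλ) / (∫_0^u P_λ[X=k] dλ)² > 0; in particular u ↦ λ₂*(u) is strictly increasing on (0,1). -/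

import Mathlib

open MeasureTheory Real

/-- Standard normal density `φ`. -/
noncomputable def stdNormalPDF (s : ℝ) : ℝ := Real.exp (-s ^ 2 / 2) / Real.sqrt (2 * π)

/-- Standard normal cumulative distribution function `Φ`. -/
noncomputable def stdNormalCDF (q : ℝ) : ℝ := ∫ t in Set.Iic q, stdNormalPDF t

/-- Probability `P_λ[X = k]` of exactly `k` defaults among `n` borrowers in the
one-factor Gaussian model with asset correlation `ρ`, where `g = Φ⁻¹`. -/
noncomputable def probDefaults (n k : ℕ) (ρ : ℝ) (g : ℝ → ℝ) (lam : ℝ) : ℝ :=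
  ∫ y : ℝ, stdNormalPDF y * ((n.choose k : ℝ) *
    stdNormalCDF ((g lam - Real.sqrt ρ * y) / Real.sqrt (1 - ρ)) ^ k *
    (1 - stdNormalCDF ((g lam - Real.sqrt ρ * y) / Real.sqrt (1 - ρ))) ^ (n - k))

/-! ### Auxiliary lemmas -/

lemma stdNormalPDF_pos (s : ℝ) : 0 < stdNormalPDF s :=
  div_pos (Real.exp_pos _) (Real.sqrt_pos.mpr (by positivity))

lemma stdNormalPDF_eq : stdNormalPDF = fun s => Real.exp (-(1/2) * s ^ 2) / Real.sqrt (2 * π) := by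
  funext s
  unfold stdNormalPDF
  rw [show -s ^ 2 / 2 = -(1/2) * s ^ 2 by ring]

lemma stdNormalPDF_integrable : Integrable stdNormalPDF := by
  rw [stdNormalPDF_eq]
  exact (integrable_exp_neg_mul_sq (by norm_num : (0:ℝ) < 1/2)).div_const _

lemma stdNormalPDF_continuous : Continuous stdNormalPDF := by
  unfold stdNormalPDF
  fun_prop

lemma stdNormalPDF_integral : ∫ s : ℝ, stdNormalPDF s = 1 := by
  rw [stdNormalPDF_eq]
  rw [integral_div, integral_gaussian]
  rw [show π / (1/2 : ℝ) = 2 * π by ring]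
  exact div_self (ne_of_gt (Real.sqrt_pos.mpr (by positivity)))

lemma stdNormalCDF_sub (a b : ℝ) :
    stdNormalCDF b - stdNormalCDF a = ∫ x in a..b, stdNormalPDF x :=
  intervalIntegral.integral_Iic_sub_Iic stdNormalPDF_integrable.integrableOn
    stdNormalPDF_integrable.integrableOn

lemma stdNormalCDF_strictMono : StrictMono stdNormalCDF := by
  intro a b hab
  have h := stdNormalCDF_sub a b
  have hpos : 0 < ∫ x in a..b, stdNormalPDF x :=
    intervalIntegral.intervalIntegral_pos_of_pos
      (stdNormalPDF_integrable.intervalIntegrable) stdNormalPDF_pos hab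
  linarith

lemma stdNormalCDF_nonneg (q : ℝ) : 0 ≤ stdNormalCDF q :=
  setIntegral_nonneg measurableSet_Iic fun x _ => (stdNormalPDF_pos x).le

lemma stdNormalCDF_pos (q : ℝ) : 0 < stdNormalCDF q :=
  lt_of_le_of_lt (stdNormalCDF_nonneg (q - 1)) (stdNormalCDF_strictMono (by linarith))

lemma stdNormalCDF_lt_one (q : ℝ) : stdNormalCDF q < 1 := by
  have h1 : stdNormalCDF (q + 1) ≤ 1 := by
    have := setIntegral_le_integral stdNormalPDF_integrable
      (Filter.Eventually.of_forall fun x => (stdNormalPDF_pos x).le) (s := Set.Iic (q + 1))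
    rw [stdNormalPDF_integral] at this
    exact this
  exact lt_of_lt_of_le (stdNormalCDF_strictMono (by linarith)) h1

lemma stdNormalCDF_continuous : Continuous stdNormalCDF := by
  have h : stdNormalCDF = fun q => (∫ x in (0:ℝ)..q, stdNormalPDF x) + stdNormalCDF 0 := by
    funext q
    have := stdNormalCDF_sub 0 q
    linarith
  rw [h]
  exact (intervalIntegral.continuous_primitive
    (fun a b => stdNormalPDF_integrable.intervalIntegrable) 0).add continuous_const

lemma g_continuousAt {g : ℝ → ℝ}
    (hg : ∀ lam ∈ Set.Ioo (0:ℝ) 1, stdNormalCDF (g lam) = lam)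
    {l : ℝ} (hl : l ∈ Set.Ioo (0:ℝ) 1) : ContinuousAt g l := by
  rw [Metric.continuousAt_iff]
  intro ε hε
  set a := g l - ε / 2 with ha
  set b := g l + ε / 2 with hb
  have hab1 : stdNormalCDF a < l := by
    rw [← hg l hl]; exact stdNormalCDF_strictMono (by dsimp [a]; linarith)
  have hab2 : l < stdNormalCDF b := by
    rw [← hg l hl]; exact stdNormalCDF_strictMono (by dsimp [b]; linarith)
  refine ⟨min (l - stdNormalCDF a) (stdNormalCDF b - l), by
    apply lt_min <;> linarith, fun {x} hx => ?_⟩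
  rw [Real.dist_eq] at hx
  have hx1 : stdNormalCDF a < x := by
    have := abs_lt.mp hx
    have := min_le_left (l - stdNormalCDF a) (stdNormalCDF b - l)
    linarith
  have hx2 : x < stdNormalCDF b := by
    have := abs_lt.mp hx
    have := min_le_right (l - stdNormalCDF a) (stdNormalCDF b - l)
    linarith
  have hxI : x ∈ Set.Ioo (0:ℝ) 1 :=
    ⟨lt_of_le_of_lt (stdNormalCDF_nonneg a) hx1, lt_of_lt_of_le hx2 (stdNormalCDF_lt_one b).le⟩
  have hgx : stdNormalCDF (g x) = x := hg x hxI
  have h1 : a < g x := by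
    by_contra h
    push_neg at h
    have := stdNormalCDF_strictMono.le_iff_le.mpr h
    rw [hgx] at this
    linarith
  have h2 : g x < b := by
    by_contra h
    push_neg at h
    have := stdNormalCDF_strictMono.le_iff_le.mpr h
    rw [hgx] at this
    linarith
  rw [Real.dist_eq, abs_lt]
  constructor <;> [skip; skip] <;> dsimp [a, b] at h1 h2 <;> linarith

section Model

variable (n k : ℕ) (ρ : ℝ) (g : ℝ → ℝ)

/-- The integrand in `probDefaults`. -/
noncomputable def pdIntegrand (lam y : ℝ) : ℝ :=
  stdNormalPDF y * ((n.choose k : ℝ) *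
    stdNormalCDF ((g lam - Real.sqrt ρ * y) / Real.sqrt (1 - ρ)) ^ k *
    (1 - stdNormalCDF ((g lam - Real.sqrt ρ * y) / Real.sqrt (1 - ρ))) ^ (n - k))

variable {n k}

lemma pdIntegrand_pos (hk : 0 < n.choose k) (lam y : ℝ) : 0 < pdIntegrand n k ρ g lam y := by
  have h := stdNormalCDF_pos ((g lam - Real.sqrt ρ * y) / Real.sqrt (1 - ρ))
  have h2 := stdNormalCDF_lt_one ((g lam - Real.sqrt ρ * y) / Real.sqrt (1 - ρ))
  have hC : (0:ℝ) < (n.choose k : ℝ) := Nat.cast_pos.mpr hk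
  exact mul_pos (stdNormalPDF_pos y)
    (mul_pos (mul_pos hC (pow_pos h k)) (pow_pos (by linarith) (n - k)))

lemma pdIntegrand_le (lam y : ℝ) :
    pdIntegrand n k ρ g lam y ≤ (n.choose k : ℝ) * stdNormalPDF y := by
  have h := stdNormalCDF_pos ((g lam - Real.sqrt ρ * y) / Real.sqrt (1 - ρ))
  have h2 := stdNormalCDF_lt_one ((g lam - Real.sqrt ρ * y) / Real.sqrt (1 - ρ))
  have hp1 : stdNormalCDF ((g lam - Real.sqrt ρ * y) / Real.sqrt (1 - ρ)) ^ k ≤ 1 :=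
    pow_le_one₀ h.le h2.le
  have hp2 : (1 - stdNormalCDF ((g lam - Real.sqrt ρ * y) / Real.sqrt (1 - ρ))) ^ (n - k) ≤ 1 :=
    pow_le_one₀ (by linarith) (by linarith)
  have hC : (0:ℝ) ≤ (n.choose k : ℝ) := Nat.cast_nonneg _
  unfold pdIntegrand
  rw [mul_comm ((n.choose k : ℝ)) (stdNormalPDF y)]
  apply mul_le_mul_of_nonneg_left _ (stdNormalPDF_pos y).le
  calc (n.choose k : ℝ) * stdNormalCDF ((g lam - Real.sqrt ρ * y) / Real.sqrt (1 - ρ)) ^ k *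
        (1 - stdNormalCDF ((g lam - Real.sqrt ρ * y) / Real.sqrt (1 - ρ))) ^ (n - k)
      ≤ (n.choose k : ℝ) * 1 * 1 := by
        apply mul_le_mul _ hp2 (pow_nonneg (by linarith) _)
          (by positivity)
        exact mul_le_mul_of_nonneg_left hp1 hC
    _ = (n.choose k : ℝ) := by ring

lemma pdIntegrand_continuous_y (lam : ℝ) : Continuous fun y => pdIntegrand n k ρ g lam y := by
  unfold pdIntegrand
  have h : Continuous fun y : ℝ =>
      stdNormalCDF ((g lam - Real.sqrt ρ * y) / Real.sqrt (1 - ρ)) :=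
    stdNormalCDF_continuous.comp (by fun_prop)
  exact stdNormalPDF_continuous.mul
    ((continuous_const.mul (h.pow k)).mul ((continuous_const.sub h).pow (n - k)))

lemma pdIntegrand_integrable (lam : ℝ) : Integrable (pdIntegrand n k ρ g lam) := by
  refine (stdNormalPDF_integrable.const_mul ((n.choose k : ℝ))).mono'
    (pdIntegrand_continuous_y ρ g lam).aestronglyMeasurable
    (Filter.Eventually.of_forall fun y => ?_)
  rw [Real.norm_eq_abs, abs_of_nonneg]
  · exact pdIntegrand_le ρ g lam y
  · rcases Nat.eq_zero_or_pos (n.choose k) with h | h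
    · unfold pdIntegrand; rw [h]; simp
    · exact (pdIntegrand_pos ρ g h lam y).le

lemma probDefaults_eq (lam : ℝ) :
    probDefaults n k ρ g lam = ∫ y : ℝ, pdIntegrand n k ρ g lam y := rfl

lemma probDefaults_pos (hk : 0 < n.choose k) (lam : ℝ) : 0 < probDefaults n k ρ g lam := by
  rw [probDefaults_eq]
  rw [integral_pos_iff_support_of_nonneg_ae
    (Filter.Eventually.of_forall fun y => (pdIntegrand_pos ρ g hk lam y).le)
    (pdIntegrand_integrable ρ g lam)]
  have hsupp : Function.support (pdIntegrand n k ρ g lam) = Set.univ :=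
    Set.eq_univ_of_forall fun y => (pdIntegrand_pos ρ g hk lam y).ne'
  rw [hsupp]
  simp

lemma probDefaults_le (lam : ℝ) : probDefaults n k ρ g lam ≤ (n.choose k : ℝ) := by
  rw [probDefaults_eq]
  calc (∫ y : ℝ, pdIntegrand n k ρ g lam y)
      ≤ ∫ y : ℝ, (n.choose k : ℝ) * stdNormalPDF y :=
        integral_mono (pdIntegrand_integrable ρ g lam)
          (stdNormalPDF_integrable.const_mul _) (pdIntegrand_le ρ g lam)
    _ = (n.choose k : ℝ) := by
        rw [integral_const_mul, stdNormalPDF_integral, mul_one]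

lemma probDefaults_continuousAt
    (hg : ∀ lam ∈ Set.Ioo (0:ℝ) 1, stdNormalCDF (g lam) = lam)
    {l : ℝ} (hl : l ∈ Set.Ioo (0:ℝ) 1) :
    ContinuousAt (probDefaults n k ρ g) l := by
  have : ContinuousAt (fun lam => ∫ y : ℝ, pdIntegrand n k ρ g lam y) l := by
    apply continuousAt_of_dominated
      (Filter.Eventually.of_forall fun lam =>
        (pdIntegrand_continuous_y ρ g lam).aestronglyMeasurable)
      (Filter.Eventually.of_forall fun lam =>
        (Filter.Eventually.of_forall fun y => ?_))
      (stdNormalPDF_integrable.const_mul ((n.choose k : ℝ)))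
      (Filter.Eventually.of_forall fun y => ?_)
    · rw [Real.norm_eq_abs, abs_of_nonneg]
      · exact pdIntegrand_le ρ g lam y
      · rcases Nat.eq_zero_or_pos (n.choose k) with h | h
        · unfold pdIntegrand; rw [h]; simp
        · exact (pdIntegrand_pos ρ g h lam y).le
    · -- continuity in lam
      have hgc : ContinuousAt g l := g_continuousAt hg hl
      have h1 : ContinuousAt
          (fun lam => stdNormalCDF ((g lam - Real.sqrt ρ * y) / Real.sqrt (1 - ρ))) l :=
        stdNormalCDF_continuous.continuousAt.comp ((hgc.sub continuousAt_const).div_const _)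
      exact continuousAt_const.mul
        ((continuousAt_const.mul (h1.pow k)).mul ((continuousAt_const.sub h1).pow (n - k)))
  exact this

lemma probDefaults_intervalIntegrable
    (hg : ∀ lam ∈ Set.Ioo (0:ℝ) 1, stdNormalCDF (g lam) = lam)
    {v : ℝ} (hv : v ∈ Set.Ioo (0:ℝ) 1) :
    IntervalIntegrable (probDefaults n k ρ g) volume 0 v := by
  rw [intervalIntegrable_iff_integrableOn_Ioc_of_le hv.1.le,
    integrableOn_Ioc_iff_integrableOn_Ioo]
  have hcont : ContinuousOn (probDefaults n k ρ g) (Set.Ioo 0 v) := fun x hx =>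
    (probDefaults_continuousAt ρ g hg ⟨hx.1, hx.2.trans hv.2⟩).continuousWithinAt
  refine Integrable.mono' (g := fun _ => (n.choose k : ℝ))
    (integrableOn_const measure_Ioo_lt_top.ne)
    (hcont.aestronglyMeasurable measurableSet_Ioo) ?_
  rw [ae_restrict_iff' measurableSet_Ioo]
  refine Filter.Eventually.of_forall fun x hx => ?_
  rw [Real.norm_eq_abs, abs_le]
  constructor
  · calc -(n.choose k : ℝ) ≤ 0 := neg_nonpos.mpr (Nat.cast_nonneg _)
      _ ≤ probDefaults n k ρ g x := by
        rw [probDefaults_eq]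
        exact integral_nonneg fun y => by
          rcases Nat.eq_zero_or_pos (n.choose k) with h | h
          · unfold pdIntegrand; rw [h]; simp
          · exact (pdIntegrand_pos ρ g h x y).le
  · exact probDefaults_le ρ g x

end Model

/-- The constrained neutral Bayesian estimator
`λ₂*(u) = (∫_0^u λ P_λ[X=k] dλ)/(∫_0^u P_λ[X=k] dλ)` in the one-factor Gaussian model is
differentiable on `(0,1)` with the positive derivative
`P_u[X=k] (∫_0^u (u−λ) P_λ[X=k] dλ)/(∫_0^u P_λ[X=k] dλ)²`; in particular it is strictly
increasing on `(0,1)`. -/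
theorem constrained_neutral_estimator_deriv_pos (n k : ℕ) (hn : 0 < n) (hk : k ≤ n)
    (ρ : ℝ) (hρ0 : 0 ≤ ρ) (hρ1 : ρ < 1)
    (g : ℝ → ℝ) (hg : ∀ lam ∈ Set.Ioo (0:ℝ) 1, stdNormalCDF (g lam) = lam) :
    (∀ u ∈ Set.Ioo (0:ℝ) 1,
        HasDerivAt
          (fun v => (∫ lam in (0:ℝ)..v, lam * probDefaults n k ρ g lam) /
            (∫ lam in (0:ℝ)..v, probDefaults n k ρ g lam))
          (probDefaults n k ρ g u *
            (∫ lam in (0:ℝ)..u, (u - lam) * probDefaults n k ρ g lam) /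
            (∫ lam in (0:ℝ)..u, probDefaults n k ρ g lam) ^ 2) u
        ∧ 0 < probDefaults n k ρ g u *
            (∫ lam in (0:ℝ)..u, (u - lam) * probDefaults n k ρ g lam) /
            (∫ lam in (0:ℝ)..u, probDefaults n k ρ g lam) ^ 2)
    ∧ StrictMonoOn
        (fun v => (∫ lam in (0:ℝ)..v, lam * probDefaults n k ρ g lam) /
          (∫ lam in (0:ℝ)..v, probDefaults n k ρ g lam))
        (Set.Ioo 0 1) := by
  have hck : 0 < n.choose k := Nat.choose_pos hk
  set P : ℝ → ℝ := probDefaults n k ρ g with hP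
  have hPpos : ∀ lam : ℝ, 0 < P lam := probDefaults_pos ρ g hck
  have hPcont : ∀ l ∈ Set.Ioo (0:ℝ) 1, ContinuousAt P l := fun l hl =>
    probDefaults_continuousAt ρ g hg hl
  have key : ∀ u ∈ Set.Ioo (0:ℝ) 1,
      HasDerivAt
        (fun v => (∫ lam in (0:ℝ)..v, lam * P lam) / (∫ lam in (0:ℝ)..v, P lam))
        (P u * (∫ lam in (0:ℝ)..u, (u - lam) * P lam) /
          (∫ lam in (0:ℝ)..u, P lam) ^ 2) u
      ∧ 0 < P u * (∫ lam in (0:ℝ)..u, (u - lam) * P lam) /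
          (∫ lam in (0:ℝ)..u, P lam) ^ 2 := by
    intro u hu
    have hPint : IntervalIntegrable P volume 0 u :=
      probDefaults_intervalIntegrable ρ g hg hu
    have hNint : IntervalIntegrable (fun lam => lam * P lam) volume 0 u :=
      hPint.continuousOn_mul continuous_id.continuousOn
    have hWint : IntervalIntegrable (fun lam => (u - lam) * P lam) volume 0 u :=
      hPint.continuousOn_mul (continuous_const.sub continuous_id).continuousOn
    have hmeasP : StronglyMeasurableAtFilter P (nhds u) volume :=
      ContinuousAt.stronglyMeasurableAtFilter isOpen_Ioo hPcont u hu
    have hmeasN : StronglyMeasurableAtFilter (fun lam => lam * P lam) (nhds u) volume :=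
      ContinuousAt.stronglyMeasurableAtFilter (s := Set.Ioo (0:ℝ) 1) isOpen_Ioo
        (fun x hx => continuousAt_id.mul (hPcont x hx)) u hu
    have hD' : HasDerivAt (fun v => ∫ lam in (0:ℝ)..v, P lam) (P u) u :=
      intervalIntegral.integral_hasDerivAt_right hPint hmeasP (hPcont u hu)
    have hN' : HasDerivAt (fun v => ∫ lam in (0:ℝ)..v, lam * P lam) (u * P u) u :=
      intervalIntegral.integral_hasDerivAt_right hNint hmeasN
        (continuousAt_id.mul (hPcont u hu))
    have hDpos : 0 < ∫ lam in (0:ℝ)..u, P lam :=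
      intervalIntegral.intervalIntegral_pos_of_pos_on hPint (fun x _ => hPpos x) hu.1
    have hquot := hN'.div hD' hDpos.ne'
    have hsplit : (∫ lam in (0:ℝ)..u, (u - lam) * P lam) =
        u * (∫ lam in (0:ℝ)..u, P lam) - ∫ lam in (0:ℝ)..u, lam * P lam := by
      rw [show (fun lam => (u - lam) * P lam) = fun lam => u * P lam - lam * P lam by
        funext lam; ring]
      rw [intervalIntegral.integral_sub (hPint.const_mul u) hNint,
        intervalIntegral.integral_const_mul]
    have hWpos : 0 < ∫ lam in (0:ℝ)..u, (u - lam) * P lam :=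
      intervalIntegral.intervalIntegral_pos_of_pos_on hWint
        (fun x hx => mul_pos (by linarith [hx.2]) (hPpos x)) hu.1
    constructor
    · rw [hsplit]
      exact hquot.congr_deriv (by ring)
    · exact div_pos (mul_pos (hPpos u) hWpos) (pow_pos hDpos 2)
  refine ⟨key, ?_⟩
  apply strictMonoOn_of_deriv_pos (convex_Ioo (0:ℝ) 1)
  · intro x hx
    exact ((key x hx).1.continuousAt).continuousWithinAt
  · intro x hx
    rw [interior_Ioo] at hx
    rw [(key x hx).1.deriv]
    exact (key x hx).2
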